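/- Let n ≥ 1 and let A ⊆ ℝⁿ be a nonempty bounded set which is contained in some closed ball of radius 1. Then the diameter of its c-hull satisfies diam(conv_c(A)) ≤ √(2n/(n+1)) · diam(A). -/

import Mathlib

open Metric Set RealInnerProductSpace

noncomputable section

/-- The `c`-dual of a set `A ⊆ ℝⁿ`. -/
def cDual {n : ℕ} (A : Set (EuclideanSpace ℝ (Fin n))) : Set (EuclideanSpace ℝ (Fin n)) :=
  {y | ∀ x ∈ A, ‖x - y‖ ≤ 1}

/-- The `c`-hull of a set: `conv_c(A) = (A^c)^c`. -/
def cHull {n : ℕ} (A : Set (EuclideanSpace ℝ (Fin n))) : Set (EuclideanSpace ℝ (Fin n)) :=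
  cDual (cDual A)

variable {n : ℕ}

local notation "E" => EuclideanSpace ℝ (Fin n)

set_option maxHeartbeats 1600000 in
-- Step 1: existence of minimal-ish enclosing ball with contact structure
lemma jung_aux (A' : Set (EuclideanSpace ℝ (Fin n))) (hc : IsCompact A')
    (hA'ne : A'.Nonempty) (x0 : E) (hsub : A' ⊆ closedBall x0 1) :
    ∃ z : E, ∃ r : ℝ, 0 ≤ r ∧ r ≤ 1 ∧ A' ⊆ closedBall z r ∧
      2 * r ^ 2 ≤ (Metric.diam A') ^ 2 * (n / (n + 1)) := by
  classical
  set F : E → ℝ := fun z => sSup ((fun a => dist a z) '' A') with hF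
  -- attainment of the sup
  have hFmem : ∀ z : E, ∃ a ∈ A', dist a z = F z ∧ ∀ b ∈ A', dist b z ≤ dist a z := by
    intro z
    obtain ⟨a, ha, hmax⟩ := hc.exists_isMaxOn hA'ne
      (Continuous.continuousOn (by fun_prop : Continuous fun a : E => dist a z))
    refine ⟨a, ha, ?_, fun b hb => hmax hb⟩
    refine le_antisymm
      (le_csSup ⟨dist a z, by rintro x ⟨b, hb, rfl⟩; exact hmax hb⟩ (mem_image_of_mem _ ha))
      (Real.sSup_le ?_ dist_nonneg)
    rintro x ⟨b, hb, rfl⟩; exact hmax hb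
  have hFge : ∀ z : E, ∀ a ∈ A', dist a z ≤ F z := by
    intro z a ha
    obtain ⟨b, hb, hFb, hmax⟩ := hFmem z
    exact hFb ▸ hmax a ha
  have hFle : ∀ (z : E) (c : ℝ), (∀ a ∈ A', dist a z ≤ c) → F z ≤ c := by
    intro z c h
    obtain ⟨b, hb, hFb, _⟩ := hFmem z
    exact hFb ▸ h b hb
  -- F is 1-Lipschitz, hence continuous
  have hkey : ∀ z w : E, F z ≤ F w + dist z w := by
    intro z w
    refine hFle z _ fun a ha => ?_
    calc dist a z ≤ dist a w + dist w z := dist_triangle _ _ _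
      _ ≤ F w + dist z w := by rw [dist_comm w z]; exact add_le_add_left (hFge w a ha) _
  have hFlip : LipschitzWith 1 F := by
    apply LipschitzWith.of_dist_le_mul
    intro z w
    rw [Real.dist_eq, NNReal.coe_one, one_mul, abs_sub_le_iff]
    constructor
    · have := hkey z w; linarith
    · have := hkey w z; rw [dist_comm w z] at this; linarith
  -- minimizer over a large compact ball
  obtain ⟨z, hzC, hzmin⟩ := (isCompact_closedBall x0 3).exists_isMinOn
    ⟨x0, mem_closedBall_self (by norm_num)⟩ (hFlip.continuous.continuousOn)
  set r : ℝ := F z with hr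
  obtain ⟨a₀, ha₀, ha₀r, _⟩ := hFmem z
  have hr0 : 0 ≤ r := by rw [hr, ← ha₀r]; exact dist_nonneg
  have hr1 : r ≤ 1 := by
    refine le_trans (hzmin (mem_closedBall_self (by norm_num))) ?_
    exact hFle x0 1 fun a ha => hsub ha
  have hzx0 : dist z x0 ≤ 2 := by
    calc dist z x0 ≤ dist z a₀ + dist a₀ x0 := dist_triangle _ _ _
      _ ≤ r + 1 := add_le_add (by rw [dist_comm]; exact hFge z a₀ ha₀) (hsub ha₀)
      _ ≤ 2 := by linarith
  have hAz : A' ⊆ closedBall z r := fun a ha => hFge z a ha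
  -- the contact set
  set K : Set (EuclideanSpace ℝ (Fin n)) := {a ∈ A' | dist a z = r} with hK
  -- the center lies in the closure of the convex hull of the contact set
  have hzK : z ∈ closure (convexHull ℝ K) := by
    by_contra hzout
    obtain ⟨f, u, hfu⟩ := geometric_hahn_banach_closed_point
      ((convex_convexHull ℝ K).closure) isClosed_closure hzout
    set v : EuclideanSpace ℝ (Fin n) := (InnerProductSpace.toDual ℝ _).symm f with hv
    have hvf : ∀ x, ⟪v, x⟫ = f x := fun x => InnerProductSpace.toDual_symm_apply
    have hvpos : (0:ℝ) < ‖v‖ + 1 := by positivity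
    set t : ℕ → ℝ := fun k => (1 / (k + 1)) * (1 / (‖v‖ + 1)) with ht
    have htpos : ∀ k, 0 < t k := by
      intro k; apply mul_pos <;> apply div_pos one_pos
      · positivity
      · exact hvpos
    have htle1 : ∀ k : ℕ, t k ≤ 1 / (‖v‖ + 1) := by
      intro k
      have h1 : (1:ℝ) / (k + 1) ≤ 1 := by
        rw [div_le_one (by positivity)]; linarith [(Nat.cast_nonneg k : (0:ℝ) ≤ k)]
      calc t k ≤ 1 * (1 / (‖v‖ + 1)) :=
            mul_le_mul_of_nonneg_right h1 (le_of_lt (div_pos one_pos hvpos))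
        _ = 1 / (‖v‖ + 1) := one_mul _
    have htle : ∀ k : ℕ, t k * ‖v‖ ≤ 1 := by
      intro k
      have h2 : (1 / (‖v‖ + 1)) * ‖v‖ ≤ 1 := by
        rw [one_div, inv_mul_eq_div]
        exact div_le_one_of_le₀ (by linarith [norm_nonneg v]) hvpos.le
      calc t k * ‖v‖ ≤ (1 / (‖v‖ + 1)) * ‖v‖ :=
            mul_le_mul_of_nonneg_right (htle1 k) (norm_nonneg _)
        _ ≤ 1 := h2
    have htto : Filter.Tendsto t Filter.atTop (nhds 0) := by
      have h := tendsto_one_div_add_atTop_nhds_zero_nat.mul_const (1 / (‖v‖ + 1))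
      rw [zero_mul] at h
      exact h
    -- perturbed centers
    set zk : ℕ → EuclideanSpace ℝ (Fin n) := fun k => z - t k • v with hzk
    have hzkz : ∀ k, dist (zk k) z = t k * ‖v‖ := by
      intro k
      rw [hzk]
      simp only
      rw [dist_self_sub_left, norm_smul, Real.norm_eq_abs, abs_of_pos (htpos k)]
    have hzkC : ∀ k, zk k ∈ closedBall x0 3 := by
      intro k
      rw [mem_closedBall]
      calc dist (zk k) x0 ≤ dist (zk k) z + dist z x0 := dist_triangle _ _ _
        _ ≤ 1 + 2 := add_le_add (by rw [hzkz k]; exact htle k) hzx0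
        _ = 3 := by norm_num
    -- attaining points for perturbed centers
    choose a hamem har _hmax using fun k => hFmem (zk k)
    have hFr : ∀ k, r ≤ F (zk k) := fun k => hzmin (hzkC k)
    obtain ⟨b, hbA, φ, hφ, hbtend⟩ := hc.tendsto_subseq hamem
    have httoφ : Filter.Tendsto (fun k => t (φ k)) Filter.atTop (nhds 0) :=
      htto.comp hφ.tendsto_atTop
    have hdist_ge : ∀ k, r - t k * ‖v‖ ≤ dist (a k) z := by
      intro k
      have h1 : dist (a k) (zk k) ≤ dist (a k) z + dist z (zk k) := dist_triangle _ _ _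
      have h2 : r ≤ dist (a k) (zk k) := (har k) ▸ hFr k
      rw [dist_comm z (zk k), hzkz k] at h1
      linarith
    have hbK : b ∈ K := by
      refine ⟨hbA, le_antisymm (hFge z b hbA) ?_⟩
      have h1 : Filter.Tendsto (fun k => dist (a (φ k)) z) Filter.atTop (nhds (dist b z)) :=
        hbtend.dist tendsto_const_nhds
      have h2 : Filter.Tendsto (fun k => r - t (φ k) * ‖v‖) Filter.atTop (nhds r) := by
        have := ((httoφ.mul_const ‖v‖)).const_sub r
        simpa using this
      exact le_of_tendsto_of_tendsto' h2 h1 fun k => hdist_ge (φ k)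
    have hinnerk : ∀ k, -(t k * ‖v‖ ^ 2 / 2) ≤ ⟪a k - z, v⟫ := by
      intro k
      have hdecomp : a k - zk k = (a k - z) + t k • v := by
        show a k - (z - t k • v) = (a k - z) + t k • v
        rw [sub_sub_eq_add_sub, sub_add_eq_add_sub]
      have h1 : r ^ 2 ≤ ‖a k - zk k‖ ^ 2 := by
        have h2 : r ≤ ‖a k - zk k‖ := by rw [← dist_eq_norm]; exact (har k) ▸ hFr k
        nlinarith [norm_nonneg (a k - zk k)]
      rw [hdecomp, norm_add_sq_real, real_inner_smul_right] at h1
      have h3 : ‖a k - z‖ ^ 2 ≤ r ^ 2 := by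
        have := hFge z (a k) (hamem k)
        rw [dist_eq_norm] at this
        nlinarith [norm_nonneg (a k - z)]
      have h4 : ‖t k • v‖ ^ 2 = t k ^ 2 * ‖v‖ ^ 2 := by
        rw [norm_smul, Real.norm_eq_abs, mul_pow, sq_abs]
      rw [h4] at h1
      have h5 : 0 ≤ 2 * (t k * ⟪a k - z, v⟫) + t k ^ 2 * ‖v‖ ^ 2 := by linarith
      nlinarith [h5, htpos k]
    have hinnerb : 0 ≤ ⟪b - z, v⟫ := by
      have h1 : Filter.Tendsto (fun k => ⟪a (φ k) - z, v⟫) Filter.atTop (nhds ⟪b - z, v⟫) :=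
        Filter.Tendsto.inner (hbtend.sub tendsto_const_nhds) tendsto_const_nhds
      have h2 : Filter.Tendsto (fun k => -(t (φ k) * ‖v‖ ^ 2 / 2)) Filter.atTop (nhds 0) := by
        have := (httoφ.mul_const (‖v‖ ^ 2)).div_const 2
        simpa using this.neg
      exact le_of_tendsto_of_tendsto' h2 h1 fun k => hinnerk (φ k)
    have hfb : f z ≤ f b := by
      have h1 : ⟪v, b - z⟫ = f b - f z := by
        rw [inner_sub_right, hvf, hvf]
      rw [real_inner_comm] at hinnerb
      linarith [h1 ▸ hinnerb]
    have hblt : f b < u := hfu.1 b (subset_closure (subset_convexHull ℝ K hbK))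
    linarith [hfu.2]
  refine ⟨z, r, hr0, hr1, hAz, ?_⟩
  set d := Metric.diam A' with hdd
  have hd0 : 0 ≤ d := Metric.diam_nonneg
  refine le_of_forall_pos_le_add fun ε hε => ?_
  set δ := ε / (2 * r + 1) with hδ
  have hδpos : 0 < δ := div_pos hε (by linarith)
  obtain ⟨z', hz'K, hz'd⟩ : ∃ z' ∈ convexHull ℝ K, dist z z' < δ := by
    rw [Metric.mem_closure_iff] at hzK
    exact hzK δ hδpos
  rw [convexHull_eq_union] at hz'K
  simp only [Set.mem_iUnion] at hz'K
  obtain ⟨t, hts, hai, hz't⟩ := hz'K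
  have hcard : t.card ≤ n + 1 := by
    have h := hai.card_le_finrank_succ
    rw [Fintype.card_coe] at h
    have h2 := Submodule.finrank_le (vectorSpan ℝ (Set.range ((↑) : t → EuclideanSpace ℝ (Fin n))))
    rw [finrank_euclideanSpace, Fintype.card_fin] at h2
    omega
  rw [Finset.convexHull_eq] at hz't
  obtain ⟨w, hw0, hw1, hwz⟩ := hz't
  rw [Finset.centerMass_eq_of_sum_1 _ _ hw1] at hwz
  simp only [id] at hwz
  have htne : t.Nonempty := Finset.nonempty_of_sum_ne_zero (by rw [hw1]; norm_num)
  have hKsub : ∀ i ∈ t, (i : EuclideanSpace ℝ (Fin n)) ∈ K := fun i hi => hts hi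
  have hnorm : ∀ i ∈ t, ‖i - z‖ = r := by
    intro i hi; rw [← dist_eq_norm]; exact (hKsub i hi).2
  have hsum0 : ∑ i ∈ t, w i • (i - z) = z' - z := by
    simp only [smul_sub]
    rw [Finset.sum_sub_distrib, ← Finset.sum_smul, hw1, one_smul, hwz]
  have hSj : ∀ j ∈ t, 2*r^2 - 2*(δ*r) ≤ ∑ i ∈ t, w i * ‖i - j‖^2 := by
    intro j hj
    have hinner : ⟪z' - z, j - z⟫ = ∑ i ∈ t, w i * ⟪i - z, j - z⟫ := by
      rw [← hsum0, sum_inner]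
      exact Finset.sum_congr rfl fun i _ => real_inner_smul_left _ _ _
    have hexp : ∑ i ∈ t, w i * ‖i - j‖^2
        = 2*r^2 - 2 * ⟪z' - z, j - z⟫ := by
      have hterm : ∀ i ∈ t, w i * ‖i - j‖^2
          = w i * (2*r^2) - 2 * (w i * ⟪i - z, j - z⟫) := by
        intro i hi
        have hij : (i : EuclideanSpace ℝ (Fin n)) - j = (i - z) - (j - z) := by abel
        rw [hij, norm_sub_sq_real, hnorm i hi, hnorm j hj]
        ring
      rw [Finset.sum_congr rfl hterm, Finset.sum_sub_distrib, ← Finset.sum_mul, hw1,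
        ← Finset.mul_sum, ← hinner]
      ring
    have hbnd : ⟪z' - z, j - z⟫ ≤ δ * r := by
      calc ⟪z' - z, j - z⟫ ≤ ‖z' - z‖ * ‖j - z‖ := real_inner_le_norm _ _
        _ ≤ δ * r := by
            rw [hnorm j hj]
            apply mul_le_mul_of_nonneg_right _ hr0
            rw [← dist_eq_norm, dist_comm]
            exact hz'd.le
    rw [hexp]
    linarith
  have hSle : ∀ j ∈ t, ∑ i ∈ t, w i * ‖i - j‖^2 ≤ d^2 * (1 - w j) := by
    intro j hj
    have h0 : ∑ i ∈ t, w i * ‖i - j‖^2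
        = ∑ i ∈ t.erase j, w i * ‖i - j‖^2 := by
      rw [← Finset.add_sum_erase t _ hj]
      simp
    rw [h0]
    calc ∑ i ∈ t.erase j, w i * ‖i - j‖^2
        ≤ ∑ i ∈ t.erase j, w i * d^2 := by
          apply Finset.sum_le_sum
          intro i hi
          have hiT := Finset.mem_of_mem_erase hi
          apply mul_le_mul_of_nonneg_left _ (hw0 i hiT)
          have hle : ‖(i : EuclideanSpace ℝ (Fin n)) - j‖ ≤ d := by
            rw [← dist_eq_norm]
            exact Metric.dist_le_diam_of_mem hc.isBounded (hKsub i hiT).1 (hKsub j hj).1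
          nlinarith [norm_nonneg ((i : EuclideanSpace ℝ (Fin n)) - j)]
      _ = (1 - w j) * d^2 := by
          rw [← Finset.sum_mul, Finset.sum_erase_eq_sub hj, hw1]
      _ = d^2 * (1 - w j) := mul_comm _ _
  have hjineq : ∀ j ∈ t, w j * (2*r^2 - 2*(δ*r)) ≤ w j * (d^2 * (1 - w j)) :=
    fun j hj => mul_le_mul_of_nonneg_left (le_trans (hSj j hj) (hSle j hj)) (hw0 j hj)
  have hsummed := Finset.sum_le_sum hjineq
  rw [← Finset.sum_mul, hw1, one_mul] at hsummed
  have hrhs : ∑ j ∈ t, w j * (d^2 * (1 - w j)) = d^2 * (1 - ∑ j ∈ t, w j^2) := by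
    have h1 : ∀ j ∈ t, w j * (d^2 * (1 - w j)) = d^2 * w j - d^2 * w j^2 := by
      intros; ring
    rw [Finset.sum_congr rfl h1, Finset.sum_sub_distrib, ← Finset.mul_sum, ← Finset.mul_sum, hw1]
    ring
  rw [hrhs] at hsummed
  have hkpos : (0:ℝ) < t.card := by exact_mod_cast Finset.card_pos.mpr htne
  have hcs : (1:ℝ) ≤ t.card * ∑ j ∈ t, w j^2 := by
    have h := sq_sum_le_card_mul_sum_sq (s := t) (f := w)
    rw [hw1] at h
    simpa using h
  have hsq : 1 / ((n:ℝ)+1) ≤ ∑ j ∈ t, w j^2 := by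
    have h1 : 1 / (t.card:ℝ) ≤ ∑ j ∈ t, w j^2 := by
      rw [div_le_iff₀ hkpos]
      linarith [hcs, mul_comm ((t.card:ℝ)) (∑ j ∈ t, w j^2)]
    refine le_trans ?_ h1
    apply one_div_le_one_div_of_le hkpos
    exact_mod_cast hcard
  have hfrac : 1 - ∑ j ∈ t, w j^2 ≤ (n:ℝ)/(n+1) := by
    have hne : ((n:ℝ)+1) ≠ 0 := by positivity
    have h2 : (n:ℝ)/(n+1) = 1 - 1/(n+1) := by field_simp; ring
    rw [h2]; linarith
  have hlast : 2*r^2 - 2*(δ*r) ≤ d^2 * ((n:ℝ)/(n+1)) := by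
    calc 2*r^2 - 2*(δ*r) ≤ d^2 * (1 - ∑ j ∈ t, w j^2) := hsummed
      _ ≤ d^2 * ((n:ℝ)/(n+1)) := mul_le_mul_of_nonneg_left hfrac (by positivity)
  have hδε : 2*(δ*r) ≤ ε := by
    have h3 : δ * (2*r+1) = ε := by rw [hδ]; field_simp
    nlinarith [hδpos.le, hr0]
  linarith


/-- The diameter of the `c`-hull of a set of out-radius at most `1` is at most
`√(2n/(n+1))` times the diameter of the set. -/
theorem stmt11 (n : ℕ) (hn : 1 ≤ n) (A : Set (EuclideanSpace ℝ (Fin n)))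
    (hne : A.Nonempty) (hbdd : Bornology.IsBounded A)
    (hout : ∃ x : EuclideanSpace ℝ (Fin n), A ⊆ closedBall x 1) :
    Metric.diam (cHull A) ≤ Real.sqrt (2 * n / (n + 1)) * Metric.diam A := by
  obtain ⟨x0, hx0⟩ := hout
  set A' := closure A with hA'
  have hc : IsCompact A' := Metric.isCompact_of_isClosed_isBounded isClosed_closure hbdd.closure
  have hA'ne : A'.Nonempty := hne.closure
  have hsub : A' ⊆ closedBall x0 1 := closure_minimal hx0 Metric.isClosed_closedBall
  obtain ⟨z, r, hr0, hr1, hAz, hineq⟩ := jung_aux A' hc hA'ne x0 hsub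
  have hdiam' : Metric.diam A' = Metric.diam A := by rw [hA', Metric.diam_closure]
  have hhull : cHull A ⊆ closedBall z r := by
    intro u hu
    rw [mem_closedBall, dist_eq_norm, ← norm_sub_rev]
    by_cases hzu : u = z
    · simp [hzu, hr0]
    have hzu' : (0:ℝ) < ‖z - u‖ := by
      rw [norm_pos_iff, sub_ne_zero]; exact fun h => hzu h.symm
    set c : ℝ := (1 - r) / ‖z - u‖ with hcc
    have hc0 : 0 ≤ c := div_nonneg (by linarith) hzu'.le
    set y : EuclideanSpace ℝ (Fin n) := z + c • (z - u) with hy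
    have hzy : ‖z - y‖ = 1 - r := by
      have h1 : z - y = -(c • (z - u)) := by rw [hy]; abel
      rw [h1, norm_neg, norm_smul, Real.norm_eq_abs, abs_of_nonneg hc0, hcc,
        div_mul_cancel₀ _ hzu'.ne']
    have hyA : y ∈ cDual A := by
      intro x hx
      have h2 : ‖x - z‖ ≤ r := by
        rw [← dist_eq_norm]
        exact hAz (subset_closure hx)
      calc ‖x - y‖ = ‖(x - z) + (z - y)‖ := by rw [sub_add_sub_cancel]
        _ ≤ ‖x - z‖ + ‖z - y‖ := norm_add_le _ _
        _ ≤ r + (1 - r) := by rw [hzy]; exact add_le_add_left h2 _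
        _ = 1 := by ring
    have h3 : ‖y - u‖ ≤ 1 := hu y hyA
    have h4 : y - u = (1 + c) • (z - u) := by
      rw [hy, add_smul, one_smul]; abel
    have h5 : ‖y - u‖ = ‖z - u‖ + (1 - r) := by
      rw [h4, norm_smul, Real.norm_eq_abs, abs_of_nonneg (by linarith : (0:ℝ) ≤ 1 + c)]
      rw [add_mul, one_mul, hcc, div_mul_cancel₀ _ hzu'.ne']
    linarith [h5 ▸ h3]
  have h2r : Metric.diam (cHull A) ≤ 2 * r :=
    le_trans (Metric.diam_mono hhull isBounded_closedBall) (Metric.diam_closedBall hr0)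
  have hd0 : 0 ≤ Metric.diam A := Metric.diam_nonneg
  have hsq : (2 * r)^2 ≤ (2 * n / (n + 1)) * (Metric.diam A)^2 := by
    rw [← hdiam']
    have hrw : (2 * (n:ℝ) / (n + 1)) * (Metric.diam A')^2
        = 2 * ((Metric.diam A')^2 * ((n:ℝ)/(n+1))) := by ring
    rw [hrw]
    nlinarith [hineq]
  have hfin : 2 * r ≤ Real.sqrt (2 * n / (n + 1)) * Metric.diam A := by
    have h6 : 2 * r = Real.sqrt ((2 * r)^2) := (Real.sqrt_sq (by linarith)).symm
    rw [h6]
    calc Real.sqrt ((2 * r)^2) ≤ Real.sqrt ((2 * n / (n + 1)) * (Metric.diam A)^2) :=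
          Real.sqrt_le_sqrt hsq
      _ = Real.sqrt (2 * n / (n + 1)) * Metric.diam A := by
          rw [Real.sqrt_mul (by positivity), Real.sqrt_sq hd0]
  linarith
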